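/- Under the same hypotheses, M / √(2 μ(M)) → 0 as M → ∞; equivalently √(2 μ(M)) / M → ∞. -/

import Mathlib

open MeasureTheory Set Filter

theorem stmt_4 (f F μ : ℝ → ℝ)
    (hcont : ContinuousOn f (Ici 0))
    (hpos : ∀ s, 0 ≤ s → 0 < f s)
    (hanti : StrictAntiOn f (Ici 0))
    (hint : IntegrableOn f (Ici 0))
    (hone : (∫ s in Ioi (0:ℝ), f s) = 1)
    (hF : ∀ s, F s = ∫ σ in Ioi s, f σ)
    (hμnonneg : ∀ M, 0 < M → 0 ≤ μ M)
    (hμ : ∀ M, 0 < M →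
      Real.sqrt (μ M) = (Real.sqrt 2 / 2) * ∫ s in (0:ℝ)..M, (F s - F M) ^ (-(1/2) : ℝ)) :
    Tendsto (fun M => M / Real.sqrt (2 * μ M)) atTop (nhds 0) := by
  have hIoc : ∀ a b : ℝ, 0 ≤ a → IntegrableOn f (Ioc a b) :=
    fun a b ha => hint.mono_set (fun x hx => le_trans ha hx.1.le)
  have hIoi : ∀ a : ℝ, 0 ≤ a → IntegrableOn f (Ioi a) :=
    fun a ha => hint.mono_set (fun x hx => le_trans ha (le_of_lt hx))
  -- splitting F
  have hsplit : ∀ a b : ℝ, 0 ≤ a → a ≤ b → F a = (∫ x in Ioc a b, f x) + F b := by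
    intro a b ha hab
    rw [hF, hF, ← Set.Ioc_union_Ioi_eq_Ioi hab,
      setIntegral_union (Set.Ioc_disjoint_Ioi le_rfl) measurableSet_Ioi
        (hIoc a b ha) (hIoi b (ha.trans hab))]
  -- lower bound for the chunk integral
  have hlow : ∀ a b : ℝ, 0 ≤ a → a ≤ b → f b * (b - a) ≤ ∫ x in Ioc a b, f x := by
    intro a b ha hab
    have h1 : (∫ _x in Ioc a b, f b) ≤ ∫ x in Ioc a b, f x := by
      refine setIntegral_mono_on (integrableOn_const ?_) (hIoc a b ha)
        measurableSet_Ioc ?_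
      · exact measure_Ioc_lt_top.ne
      · intro x hx
        rcases eq_or_lt_of_le hx.2 with h | h
        · exact le_of_eq (by rw [h])
        · exact (hanti (mem_Ici.2 (ha.trans hx.1.le)) (mem_Ici.2 (ha.trans hab)) h).le
    calc f b * (b - a) = (∫ _x in Ioc a b, f b) := by
          rw [setIntegral_const, Real.volume_real_Ioc, smul_eq_mul,
            max_eq_left (by linarith), mul_comm]
      _ ≤ _ := h1
  -- upper bound for the chunk integral
  have hhigh : ∀ a b : ℝ, 0 ≤ a → a ≤ b → (∫ x in Ioc a b, f x) ≤ f a * (b - a) := by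
    intro a b ha hab
    have h1 : (∫ x in Ioc a b, f x) ≤ ∫ _x in Ioc a b, f a := by
      refine setIntegral_mono_on (hIoc a b ha) (integrableOn_const ?_)
        measurableSet_Ioc ?_
      · exact measure_Ioc_lt_top.ne
      · intro x hx
        exact (hanti (mem_Ici.2 ha) (mem_Ici.2 (ha.trans hx.1.le)) hx.1).le
    calc (∫ x in Ioc a b, f x) ≤ (∫ _x in Ioc a b, f a) := h1
      _ = f a * (b - a) := by
          rw [setIntegral_const, Real.volume_real_Ioc, smul_eq_mul,
            max_eq_left (by linarith), mul_comm]
  have hchunknn : ∀ a b : ℝ, 0 ≤ a → (0:ℝ) ≤ ∫ x in Ioc a b, f x := by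
    intro a b ha
    exact setIntegral_nonneg measurableSet_Ioc (fun x hx => (hpos x (ha.trans hx.1.le)).le)
  have hFanti : ∀ a b : ℝ, 0 ≤ a → a ≤ b → F b ≤ F a := by
    intro a b ha hab
    have := hsplit a b ha hab
    have := hchunknn a b ha
    linarith
  have hFnonneg : ∀ a : ℝ, 0 ≤ a → 0 ≤ F a := by
    intro a ha
    rw [hF]
    exact setIntegral_nonneg measurableSet_Ioi (fun x hx => (hpos x (ha.trans (le_of_lt hx))).le)
  -- F tends to 0
  have hF0 : Tendsto F atTop (nhds 0) := by
    have h1 : Tendsto (fun s : ℝ => ∫ x in (0:ℝ)..s, f x) atTop (nhds 1) := by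
      have := MeasureTheory.intervalIntegral_tendsto_integral_Ioi 0 (hIoi 0 le_rfl)
        (tendsto_id (α := ℝ))
      rwa [hone] at this
    have h2 : Tendsto (fun s : ℝ => 1 - ∫ x in (0:ℝ)..s, f x) atTop (nhds 0) := by
      simpa using (tendsto_const_nhds (x := (1:ℝ))).sub h1
    refine h2.congr' ?_
    filter_upwards [eventually_ge_atTop (0:ℝ)] with s hs
    have := hsplit 0 s le_rfl hs
    rw [hF 0, hone] at this
    rw [intervalIntegral.integral_of_le hs]
    linarith
  -- the squeeze
  have hub : Tendsto (fun M : ℝ => 8 * Real.sqrt (F (M / 4))) atTop (nhds 0) := by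
    have h1 : Tendsto (fun M : ℝ => M / 4) atTop atTop :=
      tendsto_id.atTop_div_const (by norm_num)
    have h2 : Tendsto (fun M : ℝ => Real.sqrt (F (M / 4))) atTop (nhds 0) := by
      have := (Real.continuous_sqrt.tendsto 0).comp (hF0.comp h1)
      simpa [Function.comp_def] using this
    simpa using h2.const_mul (8:ℝ)
  refine tendsto_of_tendsto_of_tendsto_of_le_of_le' tendsto_const_nhds hub ?_ ?_
  · filter_upwards [eventually_ge_atTop (0:ℝ)] with M hM
    exact div_nonneg hM (Real.sqrt_nonneg _)
  · filter_upwards [eventually_gt_atTop (0:ℝ)] with M hM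
    -- key bound for fixed positive M
    set g : ℝ → ℝ := fun s => (F s - F M) ^ (-(1/2) : ℝ) with hg
    have hI : Real.sqrt (2 * μ M) = ∫ s in (0:ℝ)..M, g s := by
      rw [Real.sqrt_mul (by norm_num : (0:ℝ) ≤ 2), hμ M hM, ← mul_assoc]
      rw [show Real.sqrt 2 * (Real.sqrt 2 / 2) = 1 by
        rw [mul_div_assoc', Real.mul_self_sqrt (by norm_num : (0:ℝ) ≤ 2)]; norm_num]
      rw [one_mul]
    have hFMpos : 0 < F (M / 4) := by
      have h1 := hlow (M/4) M (by linarith) (by linarith)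
      have h2 := hsplit (M/4) M (by linarith) (by linarith)
      have h3 := hFnonneg M hM.le
      have h4 := hpos M hM.le
      nlinarith
    have hgnn : ∀ s ∈ Icc (0:ℝ) M, 0 ≤ g s := by
      intro s hs
      have h1 := hsplit s M hs.1 hs.2
      have h2 := hchunknn s M hs.1
      exact Real.rpow_nonneg (by linarith) _
    rw [hI]
    rcases em (IntervalIntegrable g volume 0 M) with hgi | hgi
    · set c : ℝ := (4 * F (M / 4)) ^ (-(1/2) : ℝ) with hc
      have hcpos : 0 < c := Real.rpow_pos_of_pos (by linarith) _
      -- pointwise bound on the middle interval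
      have hpt : ∀ s ∈ Icc (M/2) (3*M/4), c ≤ g s := by
        intro s hs
        have hs0 : (0:ℝ) ≤ s := by
          have := hs.1; linarith
        have hsM : s ≤ M := by have := hs.2; linarith
        have hsplitS := hsplit s M hs0 hsM
        have hposFs : 0 < F s - F M := by
          have := hlow s M hs0 hsM
          have := hpos M hM.le
          have : 0 < f M * (M - s) := by
            apply mul_pos (hpos M hM.le); have := hs.2; linarith
          have := hlow s M hs0 hsM
          linarith
        have hupper : F s - F M ≤ 4 * F (M / 4) := by
          -- F s - F M ≤ f s * (M - s) ≤ f s * 2 s = 4 * (f s * (s/2)) ≤ 4 * F (M/4)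
          have h1 : F s - F M ≤ f s * (M - s) := by
            have := hhigh s M hs0 hsM; linarith
          have h2 : f s * (s - s/2) ≤ F (s/2) - F s := by
            have hl := hlow (s/2) s (by linarith) (by linarith)
            have hsp := hsplit (s/2) s (by linarith) (by linarith)
            linarith
          have h3 : F (s/2) ≤ F (M/4) := by
            apply hFanti (M/4) (s/2) (by linarith)
            have := hs.1; linarith
          have h4 : F s - F M ≤ f s * (2 * s) := by
            have hfs := hpos s hs0
            have hMs : M - s ≤ 2 * s := by have := hs.1; linarith
            nlinarith
          have h5 := hFnonneg s hs0
          nlinarith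
        exact Real.rpow_le_rpow_of_nonpos hposFs hupper (by norm_num)
      -- split the integral
      have hsubint : ∀ a b : ℝ, 0 ≤ a → a ≤ b → b ≤ M → IntervalIntegrable g volume a b := by
        intro a b ha hab hbM
        refine hgi.mono_set ?_
        rw [Set.uIcc_of_le hab, Set.uIcc_of_le hM.le]
        exact Set.Icc_subset_Icc ha hbM
      have hi1 := hsubint 0 (M/2) le_rfl (by linarith) (by linarith)
      have hi2 := hsubint (M/2) (3*M/4) (by linarith) (by linarith) (by linarith)
      have hi3 := hsubint (3*M/4) M (by linarith) (by linarith) le_rfl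
      have hi23 := hsubint (M/2) M (by linarith) (by linarith) le_rfl
      have hsum1 : (∫ s in (0:ℝ)..(M/2), g s) + (∫ s in (M/2)..M, g s)
          = ∫ s in (0:ℝ)..M, g s :=
        intervalIntegral.integral_add_adjacent_intervals hi1 hi23
      have hsum2 : (∫ s in (M/2)..(3*M/4), g s) + (∫ s in (3*M/4)..M, g s)
          = ∫ s in (M/2)..M, g s :=
        intervalIntegral.integral_add_adjacent_intervals hi2 hi3
      have hnn1 : (0:ℝ) ≤ ∫ s in (0:ℝ)..(M/2), g s := by
        apply intervalIntegral.integral_nonneg (by linarith)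
        intro u hu
        exact hgnn u ⟨hu.1, by have := hu.2; linarith⟩
      have hnn3 : (0:ℝ) ≤ ∫ s in (3*M/4)..M, g s := by
        apply intervalIntegral.integral_nonneg (by linarith)
        intro u hu
        exact hgnn u ⟨by have := hu.1; linarith, hu.2⟩
      have hmid : c * (M/4) ≤ ∫ s in (M/2)..(3*M/4), g s := by
        have h1 : (∫ _s in (M/2)..(3*M/4), c) ≤ ∫ s in (M/2)..(3*M/4), g s :=
          intervalIntegral.integral_mono_on (by linarith) intervalIntegrable_const hi2 hpt
        have h2 : (∫ _s in (M/2)..(3*M/4), c) = c * (M/4) := by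
          rw [intervalIntegral.integral_const, smul_eq_mul]; ring
        linarith
      have hIlb : c * (M/4) ≤ ∫ s in (0:ℝ)..M, g s := by linarith
      have hsF : 0 < Real.sqrt (F (M/4)) := Real.sqrt_pos.2 hFMpos
      have hceq : c = (2 * Real.sqrt (F (M/4)))⁻¹ := by
        rw [hc, Real.rpow_neg (by linarith), ← Real.sqrt_eq_rpow,
          show (4:ℝ)*F (M/4) = (2*Real.sqrt (F (M/4)))^2 by
            rw [mul_pow, Real.sq_sqrt hFMpos.le]; ring,
          Real.sqrt_sq (by positivity)]
      calc M / (∫ s in (0:ℝ)..M, g s) ≤ M / (c * (M/4)) := by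
            apply div_le_div_of_nonneg_left hM.le (by positivity) hIlb
        _ = 8 * Real.sqrt (F (M/4)) := by
            rw [hceq]; field_simp; ring
    · rw [intervalIntegral.integral_undef hgi]
      simp only [div_zero]
      positivity
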